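/- Let A be an associative unital ℂ-algebra, and let (e_i)_{i∈ℤ} and (t_i)_{i∈ℤ, i≠0} be families of elements of A such that [t_i, e_j] = e_{i+j} for all integers i ≠ 0 and all j ∈ ℤ. Then the following are equivalent: (i) [e_0, [e_1, e_{−1}]] = 0; (ii) Σ_{σ∈S_3} [e_{i_{σ(1)}}, [e_{i_{σ(2)}+1}, e_{i_{σ(3)}−1}]] = 0 for all i_1, i_2, i_3 ∈ ℤ. -/

import Mathlib

open Finset

attribute [local instance 100] LieRing.ofAssociativeRing

section Aux

variable {A : Type*} [Ring A] [Algebra ℂ A]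

private def PP (e : ℤ → A) (i : Fin 3 → ℤ) : A :=
  ∑ σ : Equiv.Perm (Fin 3), ⁅e (i (σ 0)), ⁅e (i (σ 1) + 1), e (i (σ 2) - 1)⁆⁆

private lemma smul_cancel (n : ℕ) (hn : n ≠ 0) (x : A) (h : n • x = 0) : x = 0 := by
  have h2 : ((n : ℂ)) • x = 0 := by rw [Nat.cast_smul_eq_nsmul]; exact h
  have : x = ((n : ℂ))⁻¹ • (((n : ℂ)) • x) := by
    rw [smul_smul, inv_mul_cancel₀ (by exact_mod_cast hn), one_smul]
  rw [this, h2, smul_zero]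

private lemma PP_comp (e : ℤ → A) (τ : Equiv.Perm (Fin 3)) (i : Fin 3 → ℤ) :
    PP e (i ∘ τ) = PP e i := by
  unfold PP
  exact Fintype.sum_equiv (Equiv.mulLeft τ) _ _ fun σ => by
    simp [Equiv.Perm.mul_apply]

private lemma PP_swap01 (e : ℤ → A) (a b c : ℤ) : PP e ![a, b, c] = PP e ![b, a, c] := by
  have := PP_comp e (Equiv.swap 0 1) ![b, a, c]
  have h : (![b, a, c] : Fin 3 → ℤ) ∘ (Equiv.swap 0 1) = ![a, b, c] := by
    funext m; fin_cases m <;> simp [Equiv.swap_apply_def]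
  rwa [h] at this

private lemma PP_swap12 (e : ℤ → A) (a b c : ℤ) : PP e ![a, b, c] = PP e ![a, c, b] := by
  have := PP_comp e (Equiv.swap 1 2) ![a, c, b]
  have h : (![a, c, b] : Fin 3 → ℤ) ∘ (Equiv.swap 1 2) = ![a, b, c] := by
    funext m; fin_cases m <;> simp [Equiv.swap_apply_def]
  rwa [h] at this

private lemma lie_PP (e t : ℤ → A)
    (hte : ∀ i : ℤ, i ≠ 0 → ∀ j : ℤ, ⁅t i, e j⁆ = e (i + j))
    (k : ℤ) (hk : k ≠ 0) (i : Fin 3 → ℤ) :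
    ⁅t k, PP e i⁆ = ∑ m : Fin 3, PP e (Function.update i m (k + i m)) := by
  unfold PP
  rw [show ⁅t k, ∑ σ : Equiv.Perm (Fin 3), ⁅e (i (σ 0)), ⁅e (i (σ 1) + 1), e (i (σ 2) - 1)⁆⁆⁆
      = ∑ σ : Equiv.Perm (Fin 3), ⁅t k, ⁅e (i (σ 0)), ⁅e (i (σ 1) + 1), e (i (σ 2) - 1)⁆⁆⁆
    from map_sum (AddMonoidHom.mk' (fun y => ⁅t k, y⁆) (fun a b => lie_add (t k) a b)) _ _,
    Finset.sum_comm]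
  refine Finset.sum_congr rfl fun σ _ => ?_
  have h01 : σ 1 ≠ σ 0 := fun h => by simpa using σ.injective h
  have h02 : σ 2 ≠ σ 0 := fun h => by simpa using σ.injective h
  have h10 : σ 0 ≠ σ 1 := fun h => by simpa using σ.injective h
  have h12 : σ 2 ≠ σ 1 := fun h => by simpa using σ.injective h
  have h20 : σ 0 ≠ σ 2 := fun h => by simpa using σ.injective h
  have h21 : σ 1 ≠ σ 2 := fun h => by simpa using σ.injective h
  have hb : ∀ x y : ℤ, ⁅t k, ⁅e x, e y⁆⁆ = ⁅e (k + x), e y⁆ + ⁅e x, e (k + y)⁆ := by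
    intro x y; rw [leibniz_lie, hte k hk, hte k hk]
  have ha : ∀ x y z : ℤ, ⁅t k, ⁅e x, ⁅e y, e z⁆⁆⁆
      = ⁅e (k + x), ⁅e y, e z⁆⁆ + (⁅e x, ⁅e (k + y), e z⁆⁆ + ⁅e x, ⁅e y, e (k + z)⁆⁆) := by
    intro x y z; rw [leibniz_lie, hte k hk, hb, lie_add]
  rw [ha]
  rw [show (∑ m : Fin 3, ⁅e (Function.update i m (k + i m) (σ 0)),
      ⁅e (Function.update i m (k + i m) (σ 1) + 1),
        e (Function.update i m (k + i m) (σ 2) - 1)⁆⁆)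
    = ∑ l : Fin 3, ⁅e (Function.update i (σ l) (k + i (σ l)) (σ 0)),
      ⁅e (Function.update i (σ l) (k + i (σ l)) (σ 1) + 1),
        e (Function.update i (σ l) (k + i (σ l)) (σ 2) - 1)⁆⁆
    from (Equiv.sum_comp σ _).symm]
  rw [Fin.sum_univ_three]
  rw [Function.update_self, Function.update_self, Function.update_self,
    Function.update_of_ne h01, Function.update_of_ne h02,
    Function.update_of_ne h10, Function.update_of_ne h12,
    Function.update_of_ne h20, Function.update_of_ne h21]
  ring_nf
  abel

private lemma upd0 (a b c x : ℤ) : Function.update ![a, b, c] 0 x = ![x, b, c] := by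
  funext m; fin_cases m <;> simp [Function.update]

private lemma upd1 (a b c x : ℤ) : Function.update ![a, b, c] 1 x = ![a, x, c] := by
  funext m; fin_cases m <;> simp [Function.update]

private lemma upd2 (a b c x : ℤ) : Function.update ![a, b, c] 2 x = ![a, b, x] := by
  funext m; fin_cases m <;> simp [Function.update]

private lemma lie_PP3 (e t : ℤ → A)
    (hte : ∀ i : ℤ, i ≠ 0 → ∀ j : ℤ, ⁅t i, e j⁆ = e (i + j))
    (k : ℤ) (hk : k ≠ 0) (a b c : ℤ) :
    ⁅t k, PP e ![a, b, c]⁆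
      = PP e ![k + a, b, c] + PP e ![a, k + b, c] + PP e ![a, b, k + c] := by
  rw [lie_PP e t hte k hk, Fin.sum_univ_three]
  simp only [Matrix.cons_val_zero, Matrix.cons_val_one, Matrix.head_cons,
    Matrix.cons_val_two, Matrix.tail_cons, upd0, upd1, upd2]

private lemma PP_zero (e t : ℤ → A)
    (hte : ∀ i : ℤ, i ≠ 0 → ∀ j : ℤ, ⁅t i, e j⁆ = e (i + j))
    (h0 : PP e ![0, 0, 0] = 0) (a b c : ℤ) : PP e ![a, b, c] = 0 := by
  have ha : ∀ a : ℤ, PP e ![a, 0, 0] = 0 := by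
    intro a
    rcases eq_or_ne a 0 with rfl | ha
    · exact h0
    · have h := lie_PP3 e t hte a ha 0 0 0
      rw [h0, lie_zero] at h
      have e1 : PP e ![(0:ℤ), a + 0, 0] = PP e ![a + 0, 0, 0] := (PP_swap01 e _ _ _).symm
      have e2 : PP e ![(0:ℤ), 0, a + 0] = PP e ![(0:ℤ), a + 0, 0] := (PP_swap12 e _ _ _).symm
      rw [e1, e2, e1] at h
      have h3 : (3 : ℕ) • PP e ![a + 0, 0, 0] = 0 := by
        rw [show (3:ℕ) • PP e ![a + 0, 0, 0]
          = PP e ![a + 0, 0, 0] + PP e ![a + 0, 0, 0] + PP e ![a + 0, 0, 0] by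
            rw [succ_nsmul, two_nsmul]]
        exact h.symm
      have := smul_cancel 3 (by norm_num) _ h3
      simpa using this
  have hab : ∀ a b : ℤ, PP e ![a, b, 0] = 0 := by
    intro a b
    rcases eq_or_ne b 0 with rfl | hb
    · exact ha a
    · have h := lie_PP3 e t hte b hb a 0 0
      rw [ha a, lie_zero, ha (b + a)] at h
      have e2 : PP e ![a, 0, b + 0] = PP e ![a, b + 0, 0] := (PP_swap12 e _ _ _).symm
      rw [e2, zero_add] at h
      have h2 : (2 : ℕ) • PP e ![a, b + 0, 0] = 0 := by
        rw [two_nsmul]; exact h.symm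
      have := smul_cancel 2 (by norm_num) _ h2
      simpa using this
  rcases eq_or_ne c 0 with rfl | hc
  · exact hab a b
  · have h := lie_PP3 e t hte c hc a b 0
    rw [hab a b, lie_zero, hab (c + a) b, hab a (c + b)] at h
    simpa using h.symm

end Aux



/-- In an associative unital `ℂ`-algebra `A`, given families
`(e_i)_{i∈ℤ}` and `(t_i)_{i≠0}` with `[t_i, e_j] = e_{i+j}` for all `i ≠ 0`, `j ∈ ℤ`,
the single cubic Serre relation `[e_0,[e_1,e_{−1}]] = 0` is equivalent to the full family
of cubic Serre relations `Σ_{σ∈S_3} [e_{i_{σ(1)}},[e_{i_{σ(2)}+1},e_{i_{σ(3)}−1}]] = 0`. -/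
theorem serre_cubic_iff_special_case {A : Type*} [Ring A] [Algebra ℂ A]
    (e : ℤ → A) (t : ℤ → A)
    (hte : ∀ i : ℤ, i ≠ 0 → ∀ j : ℤ, t i * e j - e j * t i = e (i + j)) :
    (e 0 * (e 1 * e (-1) - e (-1) * e 1) - (e 1 * e (-1) - e (-1) * e 1) * e 0 = 0) ↔
    (∀ i : Fin 3 → ℤ, ∑ σ : Equiv.Perm (Fin 3),
        (e (i (σ 0)) * (e (i (σ 1) + 1) * e (i (σ 2) - 1) - e (i (σ 2) - 1) * e (i (σ 1) + 1))
          - (e (i (σ 1) + 1) * e (i (σ 2) - 1) - e (i (σ 2) - 1) * e (i (σ 1) + 1)) * e (i (σ 0)))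
        = 0) := by
  have hte' : ∀ i : ℤ, i ≠ 0 → ∀ j : ℤ, ⁅t i, e j⁆ = e (i + j) := by
    intro i hi j; rw [Ring.lie_def]; exact hte i hi j
  have hsum : ∀ i : Fin 3 → ℤ,
      (∑ σ : Equiv.Perm (Fin 3),
        (e (i (σ 0)) * (e (i (σ 1) + 1) * e (i (σ 2) - 1) - e (i (σ 2) - 1) * e (i (σ 1) + 1))
          - (e (i (σ 1) + 1) * e (i (σ 2) - 1) - e (i (σ 2) - 1) * e (i (σ 1) + 1)) * e (i (σ 0))))
      = PP e i := by
    intro i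
    unfold PP
    refine Finset.sum_congr rfl fun σ _ => ?_
    simp [Ring.lie_def]
  have hx : e 0 * (e 1 * e (-1) - e (-1) * e 1) - (e 1 * e (-1) - e (-1) * e 1) * e 0
      = ⁅e (0:ℤ), ⁅e (1:ℤ), e (-1:ℤ)⁆⁆ := by simp [Ring.lie_def]
  constructor
  · intro h i
    rw [hsum i]
    rw [hx] at h
    have h0 : PP e ![0, 0, 0] = 0 := by
      unfold PP
      refine Finset.sum_eq_zero fun σ _ => ?_
      have hz : (![0, 0, 0] : Fin 3 → ℤ) = fun _ => 0 := by
        funext m; fin_cases m <;> rfl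
      rw [hz]
      norm_num [h]
    have := PP_zero e t hte' h0 (i 0) (i 1) (i 2)
    have hi : i = ![i 0, i 1, i 2] := by
      funext m; fin_cases m <;> rfl
    rw [hi]; exact this
  · intro h
    have hthis := h (fun _ => 0)
    rw [Finset.sum_const, Finset.card_univ,
      show Fintype.card (Equiv.Perm (Fin 3)) = 6 by rw [Fintype.card_perm]; rfl,
      show (0:ℤ) + 1 = 1 by norm_num, show (0:ℤ) - 1 = -1 by norm_num] at hthis
    exact smul_cancel 6 (by norm_num) _ hthis
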